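/- (Discontinuity at zero key rate.) There exist finite alphabets 𝒳, 𝒴, 𝒵, a pmf p₀ on 𝒳, a payoff function π : 𝒳 × 𝒴 × 𝒵 → ℝ, and a rate R ≥ 0 such that sup over conditional pmfs p(y|x) with I(X;Y) ≤ R of min over z ∈ 𝒵 of E[π(X,Y,z)] is strictly greater than Γ_{p₀,π}(0,R), the single-letter value at secret key rate R₀ = 0. (Since the robust achievable value against an adversary who sees only the message equals the former expression for every R₀ > 0 and equals Γ_{p₀,π}(0,R) at R₀ = 0, the value is discontinuous in R₀ at R₀ = 0.) -/

import Mathlib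

open scoped BigOperators Classical

noncomputable section

/-! ### Finite probability basics -/

/-- A probability mass function on a finite type, given as a real-valued function. -/
def IsPMF {α : Type} [Fintype α] (p : α → ℝ) : Prop :=
  (∀ a, 0 ≤ p a) ∧ ∑ a, p a = 1

/-- The probability that the random variable `A` takes the value `a` under the pmf `p`. -/
def probOf {Ω : Type} {α : Type} [Fintype Ω] (p : Ω → ℝ) (A : Ω → α) (a : α) : ℝ :=
  ∑ ω, if A ω = a then p ω else 0

/-- Shannon entropy (in bits) of the random variable `A` under the pmf `p`. -/
def entropy {Ω α : Type} [Fintype Ω] [Fintype α] (p : Ω → ℝ) (A : Ω → α) : ℝ :=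
  -∑ a, probOf p A a * Real.logb 2 (probOf p A a)

/-- Conditional Shannon entropy `H(A | C)` (in bits). -/
def condEntropy {Ω α γ : Type} [Fintype Ω] [Fintype α] [Fintype γ]
    (p : Ω → ℝ) (A : Ω → α) (C : Ω → γ) : ℝ :=
  entropy p (fun ω => (A ω, C ω)) - entropy p C

/-- Shannon mutual information `I(A;B)` (in bits). -/
def mutualInfo {Ω α β : Type} [Fintype Ω] [Fintype α] [Fintype β]
    (p : Ω → ℝ) (A : Ω → α) (B : Ω → β) : ℝ :=
  entropy p A + entropy p B - entropy p (fun ω => (A ω, B ω))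

/-- Conditional Shannon mutual information `I(A;B|C)` (in bits). -/
def condMutualInfo {Ω α β γ : Type} [Fintype Ω] [Fintype α] [Fintype β] [Fintype γ]
    (p : Ω → ℝ) (A : Ω → α) (B : Ω → β) (C : Ω → γ) : ℝ :=
  entropy p (fun ω => (A ω, C ω)) + entropy p (fun ω => (B ω, C ω))
    - entropy p (fun ω => (A ω, B ω, C ω)) - entropy p C

/-- Conditional independence `A ⟂ B | C` under the pmf `p`:
`P(A=a, B=b, C=c) · P(C=c) = P(A=a, C=c) · P(B=b, C=c)` for all `a, b, c`. -/
def CondIndep {Ω α β γ : Type} [Fintype Ω] (p : Ω → ℝ)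
    (A : Ω → α) (B : Ω → β) (C : Ω → γ) : Prop :=
  ∀ a b c,
    probOf p (fun ω => (A ω, B ω, C ω)) (a, b, c) * probOf p C c
      = probOf p (fun ω => (A ω, C ω)) (a, c) * probOf p (fun ω => (B ω, C ω)) (b, c)

/-! ### Coordination schemes and adversaries -/

/-- Cardinality of the secret-key alphabet: `max 1 ⌊2^{n R₀}⌋`. -/
def keyCard (R0 : ℝ) (n : ℕ) : ℕ := max 1 ⌊(2 : ℝ) ^ ((n : ℝ) * R0)⌋₊

/-- Cardinality of the message alphabet: `max 1 ⌊2^{n R}⌋`. -/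
def msgCard (R : ℝ) (n : ℕ) : ℕ := max 1 ⌊(2 : ℝ) ^ ((n : ℝ) * R)⌋₊

/-- An `(R₀, R, n)` coordination scheme: a randomized encoder `p(j | xⁿ, k)` and a
randomized causal decoder `{p(yᵢ | j, k, x^{i-1}, y^{i-1}, z^{i-1})}`. -/
structure Scheme (X Y Z : Type) [Fintype X] [Fintype Y] [Fintype Z]
    (R0 R : ℝ) (n : ℕ) where
  enc : (Fin n → X) → Fin (keyCard R0 n) → Fin (msgCard R n) → ℝ
  enc_pmf : ∀ x k, IsPMF (enc x k)
  dec : Fin n → Fin (msgCard R n) → Fin (keyCard R0 n) →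
      (Fin n → X) → (Fin n → Y) → (Fin n → Z) → Y → ℝ
  dec_pmf : ∀ i j k x y z, IsPMF (dec i j k x y z)
  dec_causal : ∀ i j k x y z x' y' z',
      (∀ m, m < i → x m = x' m) → (∀ m, m < i → y m = y' m) →
      (∀ m, m < i → z m = z' m) →
      dec i j k x y z = dec i j k x' y' z'

/-- An adversary strategy with full causal information:
`{p(zᵢ | j, x^{i-1}, y^{i-1}, z^{i-1})}`. -/
structure Adversary (X Y Z : Type) [Fintype X] [Fintype Y] [Fintype Z]
    (R : ℝ) (n : ℕ) where
  adv : Fin n → Fin (msgCard R n) →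
      (Fin n → X) → (Fin n → Y) → (Fin n → Z) → Z → ℝ
  adv_pmf : ∀ i j x y z, IsPMF (adv i j x y z)
  adv_causal : ∀ i j x y z x' y' z',
      (∀ m, m < i → x m = x' m) → (∀ m, m < i → y m = y' m) →
      (∀ m, m < i → z m = z' m) →
      adv i j x y z = adv i j x' y' z'

/-- Sample space of a block of length `n`: `(Xⁿ, K, J, Yⁿ, Zⁿ)`. -/
abbrev Outc (X Y Z : Type) (R0 R : ℝ) (n : ℕ) : Type :=
  (Fin n → X) × Fin (keyCard R0 n) × Fin (msgCard R n) × (Fin n → Y) × (Fin n → Z)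

/-- The induced joint pmf of `(Xⁿ, K, J, Yⁿ, Zⁿ)`:
`p₀ⁿ(xⁿ)·|𝒦|⁻¹·p(j|xⁿ,k)·∏ᵢ p(yᵢ|j,k,x^{i-1},y^{i-1},z^{i-1})·p(zᵢ|j,x^{i-1},y^{i-1},z^{i-1})`. -/
def jointPMF {X Y Z : Type} [Fintype X] [Fintype Y] [Fintype Z] {R0 R : ℝ} {n : ℕ}
    (p0 : X → ℝ) (S : Scheme X Y Z R0 R n) (A : Adversary X Y Z R n) :
    Outc X Y Z R0 R n → ℝ :=
  fun ω => (∏ i, p0 (ω.1 i)) * ((keyCard R0 n : ℝ))⁻¹ *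
    S.enc ω.1 ω.2.1 ω.2.2.1 *
    ∏ i, S.dec i ω.2.2.1 ω.2.1 ω.1 ω.2.2.2.1 ω.2.2.2.2 (ω.2.2.2.1 i) *
      A.adv i ω.2.2.1 ω.1 ω.2.2.2.1 ω.2.2.2.2 (ω.2.2.2.2 i)

/-- The expected average payoff `E[(1/n) Σᵢ π(Xᵢ, Yᵢ, Zᵢ)]`. -/
def avgValue {X Y Z : Type} [Fintype X] [Fintype Y] [Fintype Z] {R0 R : ℝ} {n : ℕ}
    (p0 : X → ℝ) (π : X → Y → Z → ℝ)
    (S : Scheme X Y Z R0 R n) (A : Adversary X Y Z R n) : ℝ :=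
  ∑ ω : Outc X Y Z R0 R n, jointPMF p0 S A ω *
    ((n : ℝ)⁻¹ * ∑ i, π (ω.1 i) (ω.2.2.2.1 i) (ω.2.2.2.2 i))

/-- The robust achievable value `Π_{p₀}(R₀, R)`: the supremum over blocklengths and schemes
of the least average payoff over all (fully informed) adversary strategies. -/
def robustValue {X Y Z : Type} [Fintype X] [Fintype Y] [Fintype Z]
    (p0 : X → ℝ) (π : X → Y → Z → ℝ) (R0 R : ℝ) : ℝ :=
  ⨆ (n : ℕ) (_ : 0 < n) (S : Scheme X Y Z R0 R n),
    ⨅ A : Adversary X Y Z R n, avgValue p0 π S A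

/-! ### Single-letter quantities -/

/-- The single-letter joint pmf of `(X, Y, U, V)` built from the source `p₀` and a
conditional pmf `p(y,u,v|x)`. -/
def slJoint {X Y U V : Type} (p0 : X → ℝ) (w : X → Y × U × V → ℝ) :
    X × Y × U × V → ℝ :=
  fun q => p0 q.1 * w q.1 q.2

/-- Membership in the single-letter region `𝒫_{p₀}(R₀,R)`: `p(y,u,v|x)` is a conditional pmf,
`X — (U,V) — Y` is a Markov chain, `R₀ ≥ I(X,Y;V|U)` and `R ≥ I(X;U,V)`. -/
def memP {X Y U V : Type} [Fintype X] [Fintype Y] [Fintype U] [Fintype V]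
    (p0 : X → ℝ) (w : X → Y × U × V → ℝ) (R0 R : ℝ) : Prop :=
  (∀ x, IsPMF (w x)) ∧
  CondIndep (slJoint p0 w) (fun q => q.1) (fun q => q.2.1) (fun q => q.2.2) ∧
  R0 ≥ condMutualInfo (slJoint p0 w)
      (fun q => (q.1, q.2.1)) (fun q => q.2.2.2) (fun q => q.2.2.1) ∧
  R ≥ mutualInfo (slJoint p0 w) (fun q => q.1) (fun q => q.2.2)

/-- The expected payoff `E[π(X, Y, z(U))]` when the adversary plays a function `z : U → Z`. -/
def slPayoff {X Y Z U V : Type} [Fintype X] [Fintype Y] [Fintype U] [Fintype V]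
    (p0 : X → ℝ) (w : X → Y × U × V → ℝ) (π : X → Y → Z → ℝ) (z : U → Z) : ℝ :=
  ∑ q : X × Y × U × V, slJoint p0 w q * π q.1 q.2.1 (z q.2.2.1)

/-- The single-letter value `Γ_{p₀,π}(R₀,R)`: the supremum over finite auxiliary alphabets
`𝒰, 𝒱` and conditional pmfs `p(y,u,v|x) ∈ 𝒫_{p₀}(R₀,R)` of `min_{z : 𝒰 → 𝒵} E[π(X,Y,z(U))]`. -/
def Gamma {X Y Z : Type} [Fintype X] [Fintype Y] [Fintype Z]
    (p0 : X → ℝ) (π : X → Y → Z → ℝ) (R0 R : ℝ) : ℝ :=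
  sSup {v : ℝ | ∃ (U V : Type) (_ : Fintype U) (_ : Fintype V)
    (w : X → Y × U × V → ℝ), memP p0 w R0 R ∧
    v = ⨅ z : U → Z, slPayoff p0 w π z}


/-- The value obtainable with rate `R` when the adversary learns nothing and hence plays a
constant action: the supremum over conditional pmfs `p(y|x)` with `I(X;Y) ≤ R` of
`min_{z ∈ 𝒵} E[π(X,Y,z)]`. -/
def privateValue {X Y Z : Type} [Fintype X] [Fintype Y] [Fintype Z]
    (p0 : X → ℝ) (π : X → Y → Z → ℝ) (R : ℝ) : ℝ :=
  sSup {v : ℝ | ∃ w : X → Y → ℝ, (∀ x, IsPMF (w x)) ∧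
    mutualInfo (fun q : X × Y => p0 q.1 * w q.1 q.2) (fun q => q.1) (fun q => q.2) ≤ R ∧
    v = ⨅ z : Z, ∑ q : X × Y, p0 q.1 * w q.1 q.2 * π q.1 q.2 z}

/-! ### Auxiliary lemmas -/

section AuxLemmas

set_option linter.unusedSectionVars false

variable {Ω α β γ : Type} [Fintype Ω] [Fintype α] [Fintype β] [Fintype γ]

lemma probOf_nonneg {p : Ω → ℝ} (hp : ∀ ω, 0 ≤ p ω) (A : Ω → α) (a : α) :
    0 ≤ probOf p A a := by
  refine Finset.sum_nonneg fun ω _ => ?_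
  split <;> simp [hp ω]

lemma sum_probOf (p : Ω → ℝ) (A : Ω → α) :
    ∑ a, probOf p A a = ∑ ω, p ω := by
  unfold probOf
  rw [Finset.sum_comm]
  refine Finset.sum_congr rfl fun ω _ => ?_
  simp [Finset.sum_ite_eq]

lemma probOf_pair_left (p : Ω → ℝ) (A : Ω → α) (B : Ω → β) (C : Ω → γ) (a : α) (c : γ) :
    probOf p (fun ω => (A ω, C ω)) (a, c)
      = ∑ b, probOf p (fun ω => (A ω, B ω, C ω)) (a, b, c) := by
  unfold probOf
  rw [Finset.sum_comm]
  refine Finset.sum_congr rfl fun ω _ => ?_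
  by_cases h : A ω = a ∧ C ω = c
  · simp [Prod.ext_iff, h.1, h.2, Finset.sum_ite_eq]
  · rw [if_neg (by simp [Prod.ext_iff]; tauto)]
    refine (Finset.sum_eq_zero fun b _ => ?_).symm
    rw [if_neg (by simp [Prod.ext_iff]; tauto)]

lemma probOf_pair_right (p : Ω → ℝ) (A : Ω → α) (B : Ω → β) (C : Ω → γ) (b : β) (c : γ) :
    probOf p (fun ω => (B ω, C ω)) (b, c)
      = ∑ a, probOf p (fun ω => (A ω, B ω, C ω)) (a, b, c) := by
  unfold probOf
  rw [Finset.sum_comm]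
  refine Finset.sum_congr rfl fun ω _ => ?_
  by_cases h : B ω = b ∧ C ω = c
  · simp [Prod.ext_iff, h.1, h.2, Finset.sum_ite_eq]
  · rw [if_neg (by simp [Prod.ext_iff]; tauto)]
    refine (Finset.sum_eq_zero fun a _ => ?_).symm
    rw [if_neg (by simp [Prod.ext_iff]; tauto)]

lemma probOf_third (p : Ω → ℝ) (A : Ω → α) (B : Ω → β) (C : Ω → γ) (c : γ) :
    probOf p C c = ∑ a, ∑ b, probOf p (fun ω => (A ω, B ω, C ω)) (a, b, c) := by
  have : ∀ a, probOf p (fun ω => (A ω, C ω)) (a, c)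
      = ∑ b, probOf p (fun ω => (A ω, B ω, C ω)) (a, b, c) :=
    fun a => probOf_pair_left p A B C a c
  rw [Finset.sum_congr rfl fun a _ => (this a).symm]
  unfold probOf
  rw [Finset.sum_comm]
  refine Finset.sum_congr rfl fun ω _ => ?_
  by_cases h : C ω = c
  · simp [Prod.ext_iff, h, Finset.sum_ite_eq]
  · rw [if_neg h]
    refine (Finset.sum_eq_zero fun a _ => ?_).symm
    rw [if_neg (by simp [Prod.ext_iff]; tauto)]


lemma sum_comm3 (f : α → β → γ → ℝ) :
    ∑ a, ∑ b, ∑ c, f a b c = ∑ b, ∑ a, ∑ c, f a b c := Finset.sum_comm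

lemma sum_rot3 (f : α → β → γ → ℝ) :
    ∑ a, ∑ b, ∑ c, f a b c = ∑ c, ∑ a, ∑ b, f a b c := by
  rw [show (∑ a, ∑ b, ∑ c, f a b c) = ∑ a, ∑ c, ∑ b, f a b c from
    Finset.sum_congr rfl fun a _ => Finset.sum_comm]
  exact Finset.sum_comm

lemma cmi_expand (p : Ω → ℝ) (A : Ω → α) (B : Ω → β) (C : Ω → γ) :
    condMutualInfo p A B C
      = ∑ a, ∑ b, ∑ c,
          probOf p (fun ω => (A ω, B ω, C ω)) (a, b, c) *
            (Real.logb 2 (probOf p (fun ω => (A ω, B ω, C ω)) (a, b, c))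
              + Real.logb 2 (probOf p C c)
              - Real.logb 2 (probOf p (fun ω => (A ω, C ω)) (a, c))
              - Real.logb 2 (probOf p (fun ω => (B ω, C ω)) (b, c))) := by
  set t := probOf p (fun ω => (A ω, B ω, C ω)) with ht
  have expand : ∀ l1 l2 l3 l4 : α → β → γ → ℝ,
      (∑ a, ∑ b, ∑ c, t (a,b,c) * (l1 a b c + l2 a b c - l3 a b c - l4 a b c))
      = (∑ a, ∑ b, ∑ c, t (a,b,c) * l1 a b c) + (∑ a, ∑ b, ∑ c, t (a,b,c) * l2 a b c)
        - (∑ a, ∑ b, ∑ c, t (a,b,c) * l3 a b c)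
        - (∑ a, ∑ b, ∑ c, t (a,b,c) * l4 a b c) := by
    intro l1 l2 l3 l4
    simp [Finset.sum_add_distrib, Finset.sum_sub_distrib, mul_add, mul_sub]
  rw [expand]
  have h1 : (∑ a, ∑ b, ∑ c, t (a,b,c) * Real.logb 2 (t (a,b,c)))
      = ∑ x : α × β × γ, t x * Real.logb 2 (t x) := by
    rw [Fintype.sum_prod_type]
    exact Finset.sum_congr rfl fun a _ => (Fintype.sum_prod_type (f := fun y : β × γ => t (a, y) * Real.logb 2 (t (a, y)))).symm
  have h2 : (∑ a, ∑ b, ∑ c, t (a,b,c) * Real.logb 2 (probOf p C c))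
      = ∑ c, probOf p C c * Real.logb 2 (probOf p C c) := by
    rw [sum_rot3]
    refine Finset.sum_congr rfl fun c _ => ?_
    rw [probOf_third p A B C c, Finset.sum_mul]
    exact Finset.sum_congr rfl fun a _ => (Finset.sum_mul _ _ _).symm
  have h3 : (∑ a, ∑ b, ∑ c, t (a,b,c) * Real.logb 2 (probOf p (fun ω => (A ω, C ω)) (a, c)))
      = ∑ x : α × γ, probOf p (fun ω => (A ω, C ω)) x
          * Real.logb 2 (probOf p (fun ω => (A ω, C ω)) x) := by
    rw [Fintype.sum_prod_type]
    refine Finset.sum_congr rfl fun a _ => ?_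
    rw [Finset.sum_comm]
    refine Finset.sum_congr rfl fun c _ => ?_
    rw [probOf_pair_left p A B C a c, Finset.sum_mul]
  have h4 : (∑ a, ∑ b, ∑ c, t (a,b,c) * Real.logb 2 (probOf p (fun ω => (B ω, C ω)) (b, c)))
      = ∑ x : β × γ, probOf p (fun ω => (B ω, C ω)) x
          * Real.logb 2 (probOf p (fun ω => (B ω, C ω)) x) := by
    rw [sum_comm3, Fintype.sum_prod_type]
    refine Finset.sum_congr rfl fun b _ => ?_
    rw [Finset.sum_comm]
    refine Finset.sum_congr rfl fun c _ => ?_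
    rw [probOf_pair_right p A B C b c, Finset.sum_mul]
  rw [h1, h2, h3, h4]
  unfold condMutualInfo entropy
  rw [← ht]
  ring

/-- Key lemma: if `I(A;B|C) ≤ 0` then `A ⟂ B | C`. -/
lemma condIndep_of_cmi_nonpos (p : Ω → ℝ) (hp : IsPMF p)
    (A : Ω → α) (B : Ω → β) (C : Ω → γ)
    (h : condMutualInfo p A B C ≤ 0) : CondIndep p A B C := by
  classical
  set t := probOf p (fun ω => (A ω, B ω, C ω)) with htdef
  set r := probOf p (fun ω => (A ω, C ω)) with hrdef
  set s := probOf p (fun ω => (B ω, C ω)) with hsdef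
  set q := probOf p C with hqdef
  have ht0 : ∀ x, 0 ≤ t x := fun x => probOf_nonneg hp.1 _ _
  have hr0 : ∀ x, 0 ≤ r x := fun x => probOf_nonneg hp.1 _ _
  have hs0 : ∀ x, 0 ≤ s x := fun x => probOf_nonneg hp.1 _ _
  have hq0 : ∀ x, 0 ≤ q x := fun x => probOf_nonneg hp.1 _ _
  have hr : ∀ a c, r (a, c) = ∑ b, t (a, b, c) := fun a c => probOf_pair_left p A B C a c
  have hs : ∀ b c, s (b, c) = ∑ a, t (a, b, c) := fun b c => probOf_pair_right p A B C b c
  have hq : ∀ c, q c = ∑ a, ∑ b, t (a, b, c) := fun c => probOf_third p A B C c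
  -- basic dominations
  have htr : ∀ a b c, t (a, b, c) ≤ r (a, c) := by
    intro a b c; rw [hr]
    exact Finset.single_le_sum (fun b _ => ht0 (a, b, c)) (Finset.mem_univ b)
  have hts : ∀ a b c, t (a, b, c) ≤ s (b, c) := by
    intro a b c; rw [hs]
    exact Finset.single_le_sum (fun a _ => ht0 (a, b, c)) (Finset.mem_univ a)
  have hrq : ∀ a c, r (a, c) ≤ q c := by
    intro a c; rw [hq]
    have := Finset.single_le_sum (f := fun a => ∑ b, t (a, b, c))
      (fun a _ => Finset.sum_nonneg fun b _ => ht0 (a, b, c)) (Finset.mem_univ a)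
    rw [hr]; exact this
  have hsq : ∀ b c, s (b, c) ≤ q c := by
    intro b c
    rw [hs, hq, Finset.sum_comm]
    exact Finset.single_le_sum (f := fun b => ∑ a, t (a, b, c))
      (fun b _ => Finset.sum_nonneg fun a _ => ht0 (a, b, c)) (Finset.mem_univ b)
  -- the auxiliary product measure
  set m : α → β → γ → ℝ := fun a b c => r (a, c) * s (b, c) / q c with hmdef
  have hm0 : ∀ a b c, 0 ≤ m a b c := fun a b c =>
    div_nonneg (mul_nonneg (hr0 _) (hs0 _)) (hq0 _)
  -- total masses
  have htsum : ∑ a, ∑ b, ∑ c, t (a, b, c) = 1 := by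
    have h1 : ∑ x : α × β × γ, t x = 1 := by
      rw [htdef, sum_probOf]; exact hp.2
    rw [← h1, Fintype.sum_prod_type]
    refine Finset.sum_congr rfl fun a _ => ?_
    rw [Fintype.sum_prod_type]
  have hqsum : ∑ c, q c = 1 := by rw [hqdef, sum_probOf]; exact hp.2
  have hmsum : ∑ a, ∑ b, ∑ c, m a b c ≤ 1 := by
    rw [sum_rot3]
    have : ∀ c, ∑ a, ∑ b, m a b c ≤ q c := by
      intro c
      by_cases hqc : q c = 0
      · have : ∀ a b, m a b c = 0 := by
          intro a b; rw [hmdef]; simp [hqc]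
        simp [this, hqc]
      · have hqs : ∑ b, s (b, c) = q c := by
          rw [hq, Finset.sum_comm]
          exact Finset.sum_congr rfl fun b _ => (hs b c)
        have hqr : ∑ a, r (a, c) = q c := by
          rw [hq]
          exact Finset.sum_congr rfl fun a _ => (hr a c)
        have hinner : ∀ a, ∑ b, m a b c = r (a, c) := by
          intro a
          have : ∀ b, m a b c = r (a, c) * s (b, c) / q c := fun b => rfl
          rw [Finset.sum_congr rfl fun b _ => this b, ← Finset.sum_div, ← Finset.mul_sum,
            hqs, mul_div_assoc, div_self hqc, mul_one]
        rw [Finset.sum_congr rfl fun a _ => hinner a, hqr]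
    calc ∑ c, ∑ a, ∑ b, m a b c ≤ ∑ c, q c := Finset.sum_le_sum fun c _ => this c
      _ = 1 := hqsum
  -- pointwise inequality
  set g : α → β → γ → ℝ := fun a b c =>
    t (a, b, c) * (Real.log (t (a, b, c)) + Real.log (q c)
      - Real.log (r (a, c)) - Real.log (s (b, c))) - (t (a, b, c) - m a b c) with hgdef
  have hg0 : ∀ a b c, 0 ≤ g a b c := by
    intro a b c
    rcases eq_or_lt_of_le (ht0 (a, b, c)) with hteq | htpos
    · simp [hgdef, ← hteq, hm0 a b c]
    · have hrpos : 0 < r (a, c) := lt_of_lt_of_le htpos (htr a b c)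
      have hspos : 0 < s (b, c) := lt_of_lt_of_le htpos (hts a b c)
      have hqpos : 0 < q c := lt_of_lt_of_le hrpos (hrq a c)
      have hmpos : 0 < m a b c := div_pos (mul_pos hrpos hspos) hqpos
      have hlog : Real.log (m a b c / t (a, b, c)) ≤ m a b c / t (a, b, c) - 1 :=
        Real.log_le_sub_one_of_pos (div_pos hmpos htpos)
      have hlogeq : Real.log (m a b c / t (a, b, c))
          = Real.log (r (a, c)) + Real.log (s (b, c)) - Real.log (q c)
            - Real.log (t (a, b, c)) := by
        rw [Real.log_div (ne_of_gt hmpos) (ne_of_gt htpos), hmdef]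
        rw [Real.log_div (by positivity) (ne_of_gt hqpos),
          Real.log_mul (ne_of_gt hrpos) (ne_of_gt hspos)]
      rw [hlogeq] at hlog
      have := mul_le_mul_of_nonneg_left hlog (le_of_lt htpos)
      have hfr : t (a, b, c) * (m a b c / t (a, b, c) - 1)
          = m a b c - t (a, b, c) := by field_simp
      show 0 ≤ t (a, b, c) * (Real.log (t (a, b, c)) + Real.log (q c)
        - Real.log (r (a, c)) - Real.log (s (b, c))) - (t (a, b, c) - m a b c)
      nlinarith [this]
  -- sum of g is nonpositive
  have hgsum : ∑ a, ∑ b, ∑ c, g a b c ≤ 0 := by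
    have hcmi : ∑ a, ∑ b, ∑ c, t (a, b, c) * (Real.log (t (a, b, c)) + Real.log (q c)
        - Real.log (r (a, c)) - Real.log (s (b, c))) = Real.log 2 * condMutualInfo p A B C := by
      rw [cmi_expand p A B C]
      rw [Finset.mul_sum]
      refine Finset.sum_congr rfl fun a _ => ?_
      rw [Finset.mul_sum]
      refine Finset.sum_congr rfl fun b _ => ?_
      rw [Finset.mul_sum]
      refine Finset.sum_congr rfl fun c _ => ?_
      rw [← htdef, ← hrdef, ← hsdef, ← hqdef]
      unfold Real.logb
      have h2 : Real.log 2 ≠ 0 := ne_of_gt (Real.log_pos (by norm_num))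
      field_simp
    have hsplit : ∑ a, ∑ b, ∑ c, g a b c
        = (∑ a, ∑ b, ∑ c, t (a, b, c) * (Real.log (t (a, b, c)) + Real.log (q c)
            - Real.log (r (a, c)) - Real.log (s (b, c))))
          - ((∑ a, ∑ b, ∑ c, t (a, b, c)) - ∑ a, ∑ b, ∑ c, m a b c) := by
      simp [hgdef, Finset.sum_sub_distrib]
    rw [hsplit, hcmi, htsum]
    have hlog2 : 0 < Real.log 2 := Real.log_pos (by norm_num)
    nlinarith [hmsum]
  -- all g are zero
  have hgzero : ∀ a b c, g a b c = 0 := by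
    have hsum0 : ∑ a, ∑ b, ∑ c, g a b c = 0 := by
      refine le_antisymm hgsum ?_
      exact Finset.sum_nonneg fun a _ => Finset.sum_nonneg fun b _ =>
        Finset.sum_nonneg fun c _ => hg0 a b c
    intro a b c
    have h1 : ∀ a ∈ Finset.univ, (0:ℝ) ≤ ∑ b, ∑ c, g a b c :=
      fun a _ => Finset.sum_nonneg fun b _ => Finset.sum_nonneg fun c _ => hg0 a b c
    have h2 := (Finset.sum_eq_zero_iff_of_nonneg h1).mp hsum0 a (Finset.mem_univ a)
    have h3 : ∀ b ∈ Finset.univ, (0:ℝ) ≤ ∑ c, g a b c :=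
      fun b _ => Finset.sum_nonneg fun c _ => hg0 a b c
    have h4 := (Finset.sum_eq_zero_iff_of_nonneg h3).mp h2 b (Finset.mem_univ b)
    exact (Finset.sum_eq_zero_iff_of_nonneg fun c _ => hg0 a b c).mp h4 c (Finset.mem_univ c)
  -- conclude pointwise independence
  intro a b c
  show t (a, b, c) * q c = r (a, c) * s (b, c)
  have hgz : t (a, b, c) * (Real.log (t (a, b, c)) + Real.log (q c)
      - Real.log (r (a, c)) - Real.log (s (b, c))) - (t (a, b, c) - m a b c) = 0 :=
    hgzero a b c
  rcases eq_or_lt_of_le (ht0 (a, b, c)) with hteq | htpos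
  · -- t = 0 : then m = 0 hence r*s = 0 (or q = 0 and then r = 0)
    have hmz : m a b c = 0 := by
      rw [← hteq] at hgz; simpa using hgz
    rw [← hteq]
    by_cases hqc : q c = 0
    · have : r (a, c) = 0 := le_antisymm (hqc ▸ hrq a c) (hr0 _)
      simp [this]
    · have : r (a, c) * s (b, c) = 0 := by
        have := hmz
        rw [hmdef] at this
        simp only [div_eq_zero_iff] at this
        tauto
      simp [this]
  · have hrpos : 0 < r (a, c) := lt_of_lt_of_le htpos (htr a b c)
    have hspos : 0 < s (b, c) := lt_of_lt_of_le htpos (hts a b c)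
    have hqpos : 0 < q c := lt_of_lt_of_le hrpos (hrq a c)
    have hmpos : 0 < m a b c := div_pos (mul_pos hrpos hspos) hqpos
    -- equality case of log inequality forces t = m
    have htm : t (a, b, c) = m a b c := by
      by_contra hne
      have hx : m a b c / t (a, b, c) ≠ 1 := by
        intro h1
        exact hne (by field_simp at h1; linarith)
      have hstrict : Real.log (m a b c / t (a, b, c)) < m a b c / t (a, b, c) - 1 :=
        Real.log_lt_sub_one_of_pos (div_pos hmpos htpos) hx
      have hlogeq : Real.log (m a b c / t (a, b, c))
          = Real.log (r (a, c)) + Real.log (s (b, c)) - Real.log (q c)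
            - Real.log (t (a, b, c)) := by
        rw [Real.log_div (ne_of_gt hmpos) (ne_of_gt htpos), hmdef]
        rw [Real.log_div (by positivity) (ne_of_gt hqpos),
          Real.log_mul (ne_of_gt hrpos) (ne_of_gt hspos)]
      rw [hlogeq] at hstrict
      have hmul := mul_lt_mul_of_pos_left hstrict htpos
      have hfr : t (a, b, c) * (m a b c / t (a, b, c) - 1)
          = m a b c - t (a, b, c) := by field_simp
      nlinarith [hmul, hgz]
    rw [htm, hmdef]
    field_simp

lemma sum_sum_ite_eq' {U γ : Type} [Fintype U] [Fintype γ] (f : U → γ → ℝ) (u : U) :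
    (∑ u', ∑ v, if u' = u then f u' v else 0) = ∑ v, f u v := by
  rw [Finset.sum_comm]
  simp [Finset.sum_ite_eq']

/-- Per-`u` adversary bound under conditional independence. -/
lemma per_u_bound {U V : Type} [Fintype U] [Fintype V] (T : Bool → Bool → U → V → ℝ)
    (hT0 : ∀ x y u v, 0 ≤ T x y u v) (u : U)
    (Find : ∀ x y, (∑ v, T x y u v) * (∑ x', ∑ y', ∑ v, T x' y' u v)
        = (∑ y', ∑ v, T x y' u v) * (∑ x', ∑ v, T x' y u v))
    (z : Bool) (hz : ∀ x, (∑ y', ∑ v, T x y' u v) ≤ (∑ y', ∑ v, T z y' u v)) :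
    (∑ x, ∑ v, T x x u v) ≤ ∑ y', ∑ v, T z y' u v := by
  classical
  set c : ℝ := ∑ x', ∑ y', ∑ v, T x' y' u v with hc
  have hc0 : 0 ≤ c := Finset.sum_nonneg fun x _ => Finset.sum_nonneg fun y _ =>
    Finset.sum_nonneg fun v _ => hT0 x y u v
  have hb0 : ∀ y, 0 ≤ ∑ x', ∑ v, T x' y u v := fun y =>
    Finset.sum_nonneg fun x _ => Finset.sum_nonneg fun v _ => hT0 x y u v
  have ha0 : ∀ x, 0 ≤ ∑ y', ∑ v, T x y' u v := fun x =>
    Finset.sum_nonneg fun y _ => Finset.sum_nonneg fun v _ => hT0 x y u v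
  have hbc : ∑ y, ∑ x', ∑ v, T x' y u v = c := by
    rw [hc, Finset.sum_comm]
  rcases eq_or_lt_of_le hc0 with hceq | hcpos
  · -- total mass at u is zero
    have hle : (∑ x, ∑ v, T x x u v) ≤ c := by
      rw [hc]
      refine Finset.sum_le_sum fun x _ => ?_
      refine Finset.single_le_sum (f := fun y => ∑ v, T x y u v)
        (fun y _ => Finset.sum_nonneg fun v _ => hT0 x y u v) (Finset.mem_univ x)
    calc (∑ x, ∑ v, T x x u v) ≤ c := hle
      _ = 0 := hceq.symm
      _ ≤ ∑ y', ∑ v, T z y' u v := ha0 z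
  · -- positive mass: multiply by c and cancel
    have hmul : (∑ x, ∑ v, T x x u v) * c ≤ (∑ y', ∑ v, T z y' u v) * c := by
      rw [Finset.sum_mul]
      calc ∑ x, (∑ v, T x x u v) * c
          = ∑ x, (∑ y', ∑ v, T x y' u v) * (∑ x', ∑ v, T x' x u v) := by
            exact Finset.sum_congr rfl fun x _ => Find x x
        _ ≤ ∑ x, (∑ y', ∑ v, T z y' u v) * (∑ x', ∑ v, T x' x u v) := by
            exact Finset.sum_le_sum fun x _ =>
              mul_le_mul_of_nonneg_right (hz x) (hb0 x)
        _ = (∑ y', ∑ v, T z y' u v) * c := by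
            rw [← Finset.mul_sum, hbc]
    exact le_of_mul_le_mul_right hmul hcpos

end AuxLemmas

/-- **Discontinuity at zero key rate.**  There are finite alphabets, a source pmf, a payoff
function and a rate `R ≥ 0` such that the value achievable for every positive key rate
against a message-only adversary, `sup_{p(y|x) : I(X;Y) ≤ R} min_z E[π(X,Y,z)]`, strictly
exceeds the single-letter value `Γ_{p₀,π}(0,R)` at key rate `R₀ = 0`. -/
theorem discontinuity_at_zero_key_rate :
    ∃ (X Y Z : Type) (_ : Fintype X) (_ : Fintype Y) (_ : Fintype Z)
      (_ : Nonempty X) (_ : Nonempty Y) (_ : Nonempty Z)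
      (p0 : X → ℝ) (_ : IsPMF p0) (π : X → Y → Z → ℝ) (R : ℝ),
      0 ≤ R ∧ privateValue p0 π R > Gamma p0 π 0 R := by
  classical
  set p0 : Bool → ℝ := fun _ => (1:ℝ)/2 with hp0def
  set π : Bool → Bool → Bool → ℝ :=
    fun x y z => (if x = y then (1:ℝ) else 0) - (if x = z then 1 else 0) with hπdef
  have hp0 : IsPMF p0 := ⟨fun _ => by norm_num, by simp [hp0def]⟩
  refine ⟨Bool, Bool, Bool, inferInstance, inferInstance, inferInstance,
    ⟨true⟩, ⟨true⟩, ⟨true⟩, p0, hp0, π, 2, by norm_num, ?_⟩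
  have hπle : ∀ x y z, π x y z ≤ 1 := by
    intro x y z; rw [hπdef]; simp only []; split_ifs <;> norm_num
  have hπge : ∀ x y z, (-1:ℝ) ≤ π x y z := by
    intro x y z; rw [hπdef]; simp only []; split_ifs <;> norm_num
  -- ### Part 1 : privateValue ≥ 1/2
  have hPriv : (1:ℝ)/2 ≤ privateValue p0 π 2 := by
    set w : Bool → Bool → ℝ := fun x y => if y = x then (1:ℝ) else 0 with hwdef
    have hwpmf : ∀ x, IsPMF (w x) := by
      intro x
      constructor
      · intro y; rw [hwdef]; simp only []; split <;> norm_num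
      · rw [hwdef]; simp
    set J : Bool × Bool → ℝ := fun q => p0 q.1 * w q.1 q.2 with hJdef
    have hJval : ∀ a b : Bool, J (a, b) = if b = a then (1:ℝ)/2 else 0 := by
      intro a b; rw [hJdef, hwdef, hp0def]; simp only []; split <;> norm_num
    have hlogb : Real.logb 2 ((1:ℝ)/2) = -1 := by
      rw [show ((1:ℝ)/2) = 2⁻¹ by norm_num, Real.logb_inv, Real.logb_self_eq_one] <;> norm_num
    have hfst : ∀ a, probOf J (fun q => q.1) a = 1/2 := by
      intro a
      cases a <;>
        simp [probOf, Fintype.sum_prod_type, hJval] <;> norm_num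
    have hsnd : ∀ b, probOf J (fun q => q.2) b = 1/2 := by
      intro b
      cases b <;>
        simp [probOf, Fintype.sum_prod_type, hJval] <;> norm_num
    have hpair : ∀ x : Bool × Bool, probOf J (fun q => (q.1, q.2)) x = J x := by
      intro x
      simp [probOf, Fintype.sum_prod_type, Prod.ext_iff, ite_and,
        Finset.sum_ite_eq, Finset.sum_ite_eq', hJval]
    have hHfst : entropy J (fun q => q.1) = 1 := by
      unfold entropy
      simp [hfst, hlogb]
    have hHsnd : entropy J (fun q => q.2) = 1 := by
      unfold entropy
      simp [hsnd, hlogb]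
    have hHpair : entropy J (fun q => (q.1, q.2)) = 1 := by
      unfold entropy
      simp [hpair, Fintype.sum_prod_type, hJval, hlogb]
    have hMI : mutualInfo J (fun q => q.1) (fun q => q.2) ≤ 2 := by
      unfold mutualInfo
      rw [hHfst, hHsnd, hHpair]
      norm_num
    have hval : ∀ z : Bool, (∑ q : Bool × Bool, p0 q.1 * w q.1 q.2 * π q.1 q.2 z) = 1/2 := by
      intro z
      rw [hπdef, hwdef, hp0def]
      cases z <;> simp [Fintype.sum_prod_type]
    have hmem : (1:ℝ)/2 ∈ {v : ℝ | ∃ w : Bool → Bool → ℝ, (∀ x, IsPMF (w x)) ∧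
        mutualInfo (fun q : Bool × Bool => p0 q.1 * w q.1 q.2) (fun q => q.1) (fun q => q.2) ≤ 2 ∧
        v = ⨅ z : Bool, ∑ q : Bool × Bool, p0 q.1 * w q.1 q.2 * π q.1 q.2 z} := by
      refine ⟨w, hwpmf, ?_, ?_⟩
      · exact hMI
      · simp only [hval]
        exact (ciInf_const).symm
    have hBdd : BddAbove {v : ℝ | ∃ w : Bool → Bool → ℝ, (∀ x, IsPMF (w x)) ∧
        mutualInfo (fun q : Bool × Bool => p0 q.1 * w q.1 q.2) (fun q => q.1) (fun q => q.2) ≤ 2 ∧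
        v = ⨅ z : Bool, ∑ q : Bool × Bool, p0 q.1 * w q.1 q.2 * π q.1 q.2 z} := by
      refine ⟨1, fun v hv => ?_⟩
      obtain ⟨w', hw', _, rfl⟩ := hv
      have hle : (⨅ z : Bool, ∑ q : Bool × Bool, p0 q.1 * w' q.1 q.2 * π q.1 q.2 z)
          ≤ ∑ q : Bool × Bool, p0 q.1 * w' q.1 q.2 * π q.1 q.2 true :=
        ciInf_le (Set.finite_range _).bddBelow true
      refine hle.trans ?_
      have hsum1 : (∑ q : Bool × Bool, p0 q.1 * w' q.1 q.2) = 1 := by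
        rw [Fintype.sum_prod_type]
        have : ∀ x : Bool, (∑ y, p0 x * w' x y) = p0 x := by
          intro x
          rw [← Finset.mul_sum, (hw' x).2, mul_one]
        rw [Finset.sum_congr rfl fun x _ => this x, hp0def]
        norm_num
      calc (∑ q : Bool × Bool, p0 q.1 * w' q.1 q.2 * π q.1 q.2 true)
          ≤ ∑ q : Bool × Bool, p0 q.1 * w' q.1 q.2 := by
            refine Finset.sum_le_sum fun q _ => ?_
            have h1 : 0 ≤ p0 q.1 * w' q.1 q.2 :=
              mul_nonneg (by rw [hp0def]; norm_num) ((hw' q.1).1 q.2)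
            nlinarith [hπle q.1 q.2 true]
        _ = 1 := hsum1
    exact le_csSup hBdd hmem
  -- ### Part 2 : Gamma ≤ 0
  have hGamma : Gamma p0 π 0 2 ≤ 0 := by
    unfold Gamma
    refine Real.sSup_le (fun v hv => ?_) le_rfl
    obtain ⟨U, V, iU, iV, w, ⟨hw, hMarkov, hR0, -⟩, hveq⟩ := hv
    set P : Bool × Bool × U × V → ℝ := slJoint p0 w with hPdef
    have hPnn : ∀ q, 0 ≤ P q := fun q =>
      mul_nonneg (by rw [hp0def]; norm_num) ((hw q.1).1 q.2)
    have hPsum : ∑ q, P q = 1 := by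
      rw [hPdef]
      unfold slJoint
      rw [Fintype.sum_prod_type]
      have h1 : ∀ x : Bool, (∑ y : Bool × U × V, p0 x * w x y) = p0 x := by
        intro x; rw [← Finset.mul_sum, (hw x).2, mul_one]
      rw [Finset.sum_congr rfl fun x _ => h1 x, hp0def]
      norm_num
    have hPpmf : IsPMF P := ⟨hPnn, hPsum⟩
    have hCI1 : CondIndep P (fun q => (q.1, q.2.1)) (fun q => q.2.2.2) (fun q => q.2.2.1) :=
      condIndep_of_cmi_nonpos P hPpmf _ _ _ hR0
    -- abbreviations for the marginals
    set C : U → ℝ := fun u => ∑ x, ∑ y, ∑ v, P (x, y, u, v) with hC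
    set D : U → V → ℝ := fun u v => ∑ x, ∑ y, P (x, y, u, v) with hD
    set av : Bool → U → ℝ := fun x u => ∑ y, ∑ v, P (x, y, u, v) with hav
    set bv : Bool → U → ℝ := fun y u => ∑ x, ∑ v, P (x, y, u, v) with hbv
    set t3 : Bool → Bool → U → ℝ := fun x y u => ∑ v, P (x, y, u, v) with ht3
    -- conversions of probOf to explicit sums
    have cT : ∀ (x y : Bool) (u : U) (v : V),
        probOf P (fun q => ((q.1, q.2.1), q.2.2.2, q.2.2.1)) ((x, y), v, u) = P (x, y, u, v) := by
      intro x y u v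
      simp [probOf, Fintype.sum_prod_type, Prod.ext_iff, ite_and,
        sum_sum_ite_eq', Finset.sum_ite_eq, Finset.sum_ite_eq']
    have cc : ∀ u : U, probOf P (fun q => q.2.2.1) u = C u := by
      intro u
      show _ = ∑ x, ∑ y, ∑ v, P (x, y, u, v)
      simp [probOf, Fintype.sum_prod_type, Prod.ext_iff, ite_and,
        sum_sum_ite_eq', Finset.sum_ite_eq, Finset.sum_ite_eq']
    have ct3 : ∀ (x y : Bool) (u : U),
        probOf P (fun q => ((q.1, q.2.1), q.2.2.1)) ((x, y), u) = t3 x y u := by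
      intro x y u
      show _ = ∑ v, P (x, y, u, v)
      simp [probOf, Fintype.sum_prod_type, Prod.ext_iff, ite_and,
        sum_sum_ite_eq', Finset.sum_ite_eq, Finset.sum_ite_eq']
    have cD : ∀ (u : U) (v : V),
        probOf P (fun q => (q.2.2.2, q.2.2.1)) (v, u) = D u v := by
      intro u v
      show _ = ∑ x, ∑ y, P (x, y, u, v)
      simp [probOf, Fintype.sum_prod_type, Prod.ext_iff, ite_and,
        sum_sum_ite_eq', Finset.sum_ite_eq, Finset.sum_ite_eq']
    have cT2 : ∀ (x y : Bool) (u : U) (v : V),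
        probOf P (fun q => (q.1, q.2.1, q.2.2)) (x, y, (u, v)) = P (x, y, u, v) := by
      intro x y u v
      simp [probOf, Fintype.sum_prod_type, Prod.ext_iff, ite_and,
        sum_sum_ite_eq', Finset.sum_ite_eq, Finset.sum_ite_eq']
    have cD2 : ∀ (u : U) (v : V),
        probOf P (fun q => q.2.2) (u, v) = D u v := by
      intro u v
      show _ = ∑ x, ∑ y, P (x, y, u, v)
      simp [probOf, Fintype.sum_prod_type, Prod.ext_iff, ite_and,
        sum_sum_ite_eq', Finset.sum_ite_eq, Finset.sum_ite_eq']
    have cg : ∀ (x : Bool) (u : U) (v : V),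
        probOf P (fun q => (q.1, q.2.2)) (x, (u, v)) = ∑ y, P (x, y, u, v) := by
      intro x u v
      simp [probOf, Fintype.sum_prod_type, Prod.ext_iff, ite_and,
        sum_sum_ite_eq', Finset.sum_ite_eq, Finset.sum_ite_eq']
    have ch : ∀ (y : Bool) (u : U) (v : V),
        probOf P (fun q => (q.2.1, q.2.2)) (y, (u, v)) = ∑ x, P (x, y, u, v) := by
      intro y u v
      simp [probOf, Fintype.sum_prod_type, Prod.ext_iff, ite_and,
        sum_sum_ite_eq', Finset.sum_ite_eq, Finset.sum_ite_eq']
    -- Fact 1 : (X,Y) ⟂ V | U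
    have F1 : ∀ (x y : Bool) (u : U) (v : V),
        P (x, y, u, v) * C u = t3 x y u * D u v := by
      intro x y u v
      have h := hCI1 (x, y) v u
      rwa [cT, cc, ct3, cD] at h
    -- Fact 2 : X ⟂ Y | (U,V)
    have F2 : ∀ (x y : Bool) (u : U) (v : V),
        P (x, y, u, v) * D u v = (∑ y', P (x, y', u, v)) * (∑ x', P (x', y, u, v)) := by
      intro x y u v
      have h := hMarkov x y (u, v)
      rwa [cT2, cD2, cg, ch] at h
    -- marginalized versions of Fact 1
    have Fg : ∀ (x : Bool) (u : U) (v : V),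
        (∑ y, P (x, y, u, v)) * C u = av x u * D u v := by
      intro x u v
      show _ = (∑ y, ∑ v', P (x, y, u, v')) * D u v
      rw [Finset.sum_mul, Finset.sum_mul]
      exact Finset.sum_congr rfl fun y _ => F1 x y u v
    have Fh : ∀ (y : Bool) (u : U) (v : V),
        (∑ x, P (x, y, u, v)) * C u = bv y u * D u v := by
      intro y u v
      show _ = (∑ x, ∑ v', P (x, y, u, v')) * D u v
      rw [Finset.sum_mul, Finset.sum_mul]
      exact Finset.sum_congr rfl fun x _ => F1 x y u v
    -- domination facts
    have hTD : ∀ (x y : Bool) (u : U) (v : V), P (x, y, u, v) ≤ D u v := by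
      intro x y u v
      show _ ≤ ∑ x', ∑ y', P (x', y', u, v)
      calc P (x, y, u, v) ≤ ∑ y', P (x, y', u, v) :=
            Finset.single_le_sum (f := fun y' => P (x, y', u, v))
              (fun y' _ => hPnn _) (Finset.mem_univ y)
        _ ≤ ∑ x', ∑ y', P (x', y', u, v) :=
            Finset.single_le_sum (f := fun x' => ∑ y', P (x', y', u, v))
              (fun x' _ => Finset.sum_nonneg fun y' _ => hPnn _) (Finset.mem_univ x)
    -- pointwise product identity with C²
    have step : ∀ (x y : Bool) (u : U) (v : V),
        P (x, y, u, v) * (C u * C u) = av x u * bv y u * D u v := by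
      intro x y u v
      by_cases hD0 : D u v = 0
      · have hTz : P (x, y, u, v) = 0 :=
          le_antisymm (hD0 ▸ hTD x y u v) (hPnn _)
        rw [hTz, hD0]; ring
      · refine mul_right_cancel₀ hD0 ?_
        have h1 : P (x, y, u, v) * D u v * (C u * C u)
            = ((∑ y', P (x, y', u, v)) * C u) * ((∑ x', P (x', y, u, v)) * C u) := by
          rw [F2 x y u v]; ring
        rw [Fg x u v, Fh y u v] at h1
        linear_combination h1
    -- sum over v : t3 * C² = av * bv * C
    have key : ∀ (x y : Bool) (u : U),
        t3 x y u * (C u * C u) = av x u * bv y u * C u := by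
      intro x y u
      have h1 : ∑ v, (P (x, y, u, v) * (C u * C u)) = ∑ v, (av x u * bv y u * D u v) :=
        Finset.sum_congr rfl fun v _ => step x y u v
      rw [← Finset.sum_mul, ← Finset.mul_sum] at h1
      have hDC : ∑ v, D u v = C u := by
        show (∑ v, ∑ x, ∑ y, P (x, y, u, v)) = ∑ x, ∑ y, ∑ v, P (x, y, u, v)
        exact (sum_rot3 fun x y v => P (x, y, u, v)).symm
      rw [hDC] at h1
      exact h1
    -- conditional independence of X and Y given U
    have ht3a : ∀ (x y : Bool) (u : U), t3 x y u ≤ av x u := by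
      intro x y u
      show _ ≤ ∑ y', ∑ v, P (x, y', u, v)
      exact Finset.single_le_sum (f := fun y' => ∑ v, P (x, y', u, v))
        (fun y' _ => Finset.sum_nonneg fun v _ => hPnn _) (Finset.mem_univ y)
    have haC : ∀ (x : Bool) (u : U), av x u ≤ C u := by
      intro x u
      show _ ≤ ∑ x', ∑ y, ∑ v, P (x', y, u, v)
      exact Finset.single_le_sum (f := fun x' => ∑ y, ∑ v, P (x', y, u, v))
        (fun x' _ => Finset.sum_nonneg fun y _ => Finset.sum_nonneg fun v _ => hPnn _)
        (Finset.mem_univ x)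
    have ha0 : ∀ (x : Bool) (u : U), 0 ≤ av x u := fun x u =>
      Finset.sum_nonneg fun y _ => Finset.sum_nonneg fun v _ => hPnn _
    have ht30 : ∀ (x y : Bool) (u : U), 0 ≤ t3 x y u := fun x y u =>
      Finset.sum_nonneg fun v _ => hPnn _
    have Find : ∀ (x y : Bool) (u : U), t3 x y u * C u = av x u * bv y u := by
      intro x y u
      by_cases hC0 : C u = 0
      · have h1 : t3 x y u = 0 :=
          le_antisymm (((ht3a x y u).trans (haC x u)).trans (le_of_eq hC0)) (ht30 x y u)
        have h2 : av x u = 0 :=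
          le_antisymm ((haC x u).trans (le_of_eq hC0)) (ha0 x u)
        rw [h1, h2, zero_mul, zero_mul]
      · exact mul_right_cancel₀ hC0 (by linear_combination key x y u)
    -- the adversary's optimal strategy
    set z0 : U → Bool := fun u => if av false u ≤ av true u then true else false with hz0
    have hzopt : ∀ (u : U) (x : Bool), av x u ≤ av (z0 u) u := by
      intro u x
      show av x u ≤ av (if av false u ≤ av true u then true else false) u
      by_cases hcase : av false u ≤ av true u
      · rw [if_pos hcase]; cases x
        · exact hcase
        · exact le_refl _
      · rw [if_neg hcase]; cases x
        · exact le_refl _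
        · exact le_of_lt (lt_of_not_ge hcase)
    -- payoff expansion
    have hexp : slPayoff p0 w π z0
        = ∑ u, ∑ x, ∑ y, ∑ v, P (x, y, u, v) * π x y (z0 u) := by
      unfold slPayoff
      rw [show (∑ q : Bool × Bool × U × V, slJoint p0 w q * π q.1 q.2.1 (z0 q.2.2.1))
          = ∑ x, ∑ y, ∑ u, ∑ v, P (x, y, u, v) * π x y (z0 u) from by
        rw [Fintype.sum_prod_type]
        refine Finset.sum_congr rfl fun x _ => ?_
        rw [Fintype.sum_prod_type]
        refine Finset.sum_congr rfl fun y _ => ?_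
        rw [Fintype.sum_prod_type]]
      exact sum_rot3 fun x y u => ∑ v, P (x, y, u, v) * π x y (z0 u)
    -- each u contributes a nonpositive amount
    rw [hveq]
    have hfinal : slPayoff p0 w π z0 ≤ 0 := by
      rw [hexp]
      refine Finset.sum_nonpos fun u _ => ?_
      have hsplit : (∑ x, ∑ y, ∑ v, P (x, y, u, v) * π x y (z0 u))
          = (∑ x, ∑ v, P (x, x, u, v)) - (∑ y, ∑ v, P (z0 u, y, u, v)) := by
        rw [hπdef]
        simp only [mul_sub, Finset.sum_sub_distrib]
        congr 1
        · refine Finset.sum_congr rfl fun x _ => ?_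
          rw [Finset.sum_comm]
          refine Finset.sum_congr rfl fun v _ => ?_
          simp [mul_ite, Finset.sum_ite_eq]
        · have hx : ∀ x : Bool, (∑ y, ∑ v, P (x, y, u, v) * (if x = z0 u then (1:ℝ) else 0))
              = if x = z0 u then (∑ y, ∑ v, P (x, y, u, v)) else 0 := by
            intro x; by_cases hxx : x = z0 u <;> simp [hxx]
          rw [Finset.sum_congr rfl fun x _ => hx x]
          simp [Finset.sum_ite_eq']
      rw [hsplit]
      have hb := per_u_bound (fun x y u v => P (x, y, u, v))
        (fun x y u v => hPnn _) u (fun x y => Find x y u) (z0 u) (fun x => hzopt u x)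
      linarith [hb]
    have hbddA : BddBelow (Set.range fun z : U → Bool => slPayoff p0 w π z) := by
      refine ⟨-1, fun x hx => ?_⟩
      obtain ⟨z, rfl⟩ := hx
      unfold slPayoff
      have h1 : ∀ q : Bool × Bool × U × V,
          slJoint p0 w q * (-1:ℝ) ≤ slJoint p0 w q * π q.1 q.2.1 (z q.2.2.1) := fun q =>
        mul_le_mul_of_nonneg_left (hπge _ _ _) (hPnn q)
      calc (-1:ℝ) = ∑ q : Bool × Bool × U × V, slJoint p0 w q * (-1) := by
            rw [← Finset.sum_mul]
            rw [show (∑ q : Bool × Bool × U × V, slJoint p0 w q) = 1 from hPsum]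
            ring
        _ ≤ _ := Finset.sum_le_sum fun q _ => h1 q
    calc (⨅ z : U → Bool, slPayoff p0 w π z) ≤ slPayoff p0 w π z0 := ciInf_le hbddA z0
      _ ≤ 0 := hfinal
  have : (0:ℝ) < 1/2 := by norm_num
  linarith

end
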